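/- The volume of a spherical right circular cone in S³ with base radius r and height h equals π·(h − (sin h/√(tan² r + sin² h))·arctan(√(tan² r + sin² h)/cos h)). Equivalently, with a = cot r · sin h, π·∫₀^h dt/(1 + a² csc² t) equals this expression (for 0 < h < π/2, 0 < r < π/2). -/

import Mathlib

/-- Volume of the spherical right circular cone of base radius `r` and height `h`
(`0 < r, h < π/2`): with `a = cot r · sin h`,
`π ∫₀^h dt/(1 + a² csc² t) = π (h − (sin h/√(tan²r+sin²h))·arctan(√(tan²r+sin²h)/cos h))`. -/
theorem spherical_cone_volume (r h a : ℝ) (hr : 0 < r) (hr2 : r < Real.pi / 2)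
    (hh : 0 < h) (hh2 : h < Real.pi / 2) (ha : a = Real.sin h / Real.tan r) :
    Real.pi * ∫ t in (0:ℝ)..h, 1 / (1 + a ^ 2 * (1 / Real.sin t) ^ 2)
      = Real.pi * (h - (Real.sin h / Real.sqrt (Real.tan r ^ 2 + Real.sin h ^ 2)) *
          Real.arctan (Real.sqrt (Real.tan r ^ 2 + Real.sin h ^ 2) / Real.cos h)) := by
  have hpi := Real.pi_pos
  have hsinh : 0 < Real.sin h := Real.sin_pos_of_pos_of_lt_pi hh (by linarith)
  have hcosh : 0 < Real.cos h := Real.cos_pos_of_mem_Ioo ⟨by linarith, hh2⟩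
  have htanr : 0 < Real.tan r := Real.tan_pos_of_pos_of_lt_pi_div_two hr hr2
  have ha0 : 0 < a := by rw [ha]; positivity
  set s := Real.sqrt (Real.tan r ^ 2 + Real.sin h ^ 2) with hs
  have hs0 : 0 < s := Real.sqrt_pos.2 (by positivity)
  have hs2 : s ^ 2 = Real.tan r ^ 2 + Real.sin h ^ 2 := Real.sq_sqrt (by positivity)
  set c := s / Real.sin h with hcdef
  have hc0 : 0 < c := by positivity
  have key : a ^ 2 * c ^ 2 = a ^ 2 + 1 := by
    rw [ha, hcdef, div_pow, div_pow, hs2]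
    field_simp
    ring
  clear_value s c
  have hGcont : Continuous (fun t : ℝ => Real.sin t ^ 2 / (Real.sin t ^ 2 + a ^ 2)) :=
    (Real.continuous_sin.pow 2).div ((Real.continuous_sin.pow 2).add continuous_const)
      (fun t => by positivity)
  have hcongr : ∫ t in (0:ℝ)..h, 1 / (1 + a ^ 2 * (1 / Real.sin t) ^ 2)
      = ∫ t in (0:ℝ)..h, Real.sin t ^ 2 / (Real.sin t ^ 2 + a ^ 2) := by
    apply intervalIntegral.integral_congr_ae
    filter_upwards with t ht
    rw [Set.uIoc_of_le hh.le] at ht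
    have hst : 0 < Real.sin t :=
      Real.sin_pos_of_pos_of_lt_pi ht.1 (by linarith [ht.2])
    field_simp
  have hder : ∀ x ∈ Set.uIcc (0:ℝ) h,
      HasDerivAt (fun t => t - (1/c) * Real.arctan (c * Real.tan t))
        (Real.sin x ^ 2 / (Real.sin x ^ 2 + a ^ 2)) x := by
    intro x hx
    rw [Set.uIcc_of_le hh.le] at hx
    have hcx : 0 < Real.cos x :=
      Real.cos_pos_of_mem_Ioo ⟨by linarith [hx.1], lt_of_le_of_lt hx.2 hh2⟩
    have h1 : HasDerivAt Real.tan (1 / Real.cos x ^ 2) x := Real.hasDerivAt_tan hcx.ne'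
    have h2 : HasDerivAt (fun t => c * Real.tan t) (c * (1 / Real.cos x ^ 2)) x :=
      h1.const_mul c
    have h3 : HasDerivAt (fun t => Real.arctan (c * Real.tan t))
        (1 / (1 + (c * Real.tan x) ^ 2) * (c * (1 / Real.cos x ^ 2))) x :=
      (Real.hasDerivAt_arctan _).comp x h2
    have h4 := (hasDerivAt_id x).sub (h3.const_mul (1/c))
    convert h4 using 1
    · rfl
    · rfl
    · rfl
    have hsc : Real.sin x ^ 2 + Real.cos x ^ 2 = 1 := Real.sin_sq_add_cos_sq x
    rw [Real.tan_eq_sin_div_cos]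
    have hd1 : (0:ℝ) < Real.sin x ^ 2 + a ^ 2 := by positivity
    field_simp
    ring_nf
    linear_combination (-(Real.sin x ^ 2)) * key - a ^ 2 * hsc
  have hftc := intervalIntegral.integral_eq_sub_of_hasDerivAt hder
    (hGcont.intervalIntegrable 0 h)
  rw [hcongr, hftc]
  rw [Real.tan_zero, mul_zero, Real.arctan_zero, mul_zero, sub_zero]
  have e1 : (1:ℝ)/c = Real.sin h / s := by
    rw [hcdef]; field_simp
  have e2 : c * Real.tan h = s / Real.cos h := by
    rw [hcdef, Real.tan_eq_sin_div_cos]; field_simp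
  rw [e1, e2]
  ring
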